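/- arXiv:2509.20928 — 2 statements merged into one kernel-verified Lean document; each statement's English description precedes it below -/
import Mathlib

section
/- Let d be a positive integer and let P be a probability measure on ℝ^d that is absolutely continuous with respect to Lebesgue measure with density p, has finite second moment, finite differential-entropy integral ∫ p(x)|log p(x)| dx < ∞, mean μ, and positive-definite covariance matrix Σ. Let μ̂ ∈ ℝ^d, let Σ̂ be a d×d symmetric positive-definite matrix with smallest eigenvalue λ̂_min, and let Q₀ = N(0, I_d), Q̂ = N(μ̂, Σ̂). Then D_KL(P ‖ Q̂) − D_KL(P ‖ Q₀) ≤ (1/2)·( (1/λ̂_min)·(‖μ − μ̂‖₂² + ‖Σ − Σ̂‖_N) + √d·‖Σ − Σ̂‖_F − ‖μ‖₂² ). -/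
open MeasureTheory Matrix Real

/-- The density of the Gaussian measure `N(m, S)` on `ℝ^d` (w.r.t. Lebesgue
measure), for a symmetric positive-definite `S`:
`q_{m,S}(x) = (2π)^{−d/2} (det S)^{−1/2} exp(−(x − m)ᵀ S⁻¹ (x − m)/2)`. -/
noncomputable def gaussDensity {d : ℕ} (m : Fin d → ℝ)
    (S : Matrix (Fin d) (Fin d) ℝ) (x : Fin d → ℝ) : ℝ :=
  (2 * π) ^ (-(d : ℝ) / 2) * S.det ^ (-(1 : ℝ) / 2) *
    Real.exp (-((x - m) ⬝ᵥ (S⁻¹ *ᵥ (x - m))) / 2)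

/-- The Kullback–Leibler divergence `D_KL(P ‖ Q) = ∫ log(dP/dQ) dP` of a measure
`P` with Lebesgue density `p` against the Gaussian `N(m, S)`, expressed through
the density ratio `dP/dQ = p / q_{m,S}`. -/
noncomputable def klDivGauss {d : ℕ} (P : Measure (Fin d → ℝ))
    (p : (Fin d → ℝ) → ℝ) (m : Fin d → ℝ) (S : Matrix (Fin d) (Fin d) ℝ) : ℝ :=
  ∫ x, Real.log (p x / gaussDensity m S x) ∂P


section Aux
variable {d : ℕ}

variable {d : ℕ}

lemma psd_quad_nonneg {M : Matrix (Fin d) (Fin d) ℝ} (hM : M.PosSemidef)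
    (v : Fin d → ℝ) : 0 ≤ v ⬝ᵥ (M *ᵥ v) := by
  simpa using hM.dotProduct_mulVec_nonneg v

lemma inv_spectral {B : Matrix (Fin d) (Fin d) ℝ} (hB : B.PosDef) :
    B⁻¹ = (hB.1.eigenvectorUnitary : Matrix (Fin d) (Fin d) ℝ) *
      diagonal (fun i => (hB.1.eigenvalues i)⁻¹) *
      (star hB.1.eigenvectorUnitary : Matrix (Fin d) (Fin d) ℝ) := by
  apply Matrix.inv_eq_right_inv
  set U := (hB.1.eigenvectorUnitary : Matrix (Fin d) (Fin d) ℝ) with hUdef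
  set ev := hB.1.eigenvalues with hev
  have hBeq : B = U * diagonal ev * star U := by
    have := hB.1.spectral_theorem
    rwa [RCLike.ofReal_real_eq_id, Function.id_comp] at this
  rw [hBeq]
  have hU : star U * U = 1 := Matrix.mem_unitaryGroup_iff'.mp hB.1.eigenvectorUnitary.2
  have hU' : U * star U = 1 := Matrix.mem_unitaryGroup_iff.mp hB.1.eigenvectorUnitary.2
  calc U * diagonal ev * star U *
        (U * diagonal (fun i => (ev i)⁻¹) * star U)
      = U * diagonal ev * (star U * U) *
        diagonal (fun i => (ev i)⁻¹) * star U := by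
        noncomm_ring
    _ = U * (diagonal ev * diagonal (fun i => (ev i)⁻¹)) * star U := by
        rw [hU]; noncomm_ring
    _ = 1 := by
        rw [diagonal_mul_diagonal]
        have : (fun i => ev i * (ev i)⁻¹) = fun _ => (1:ℝ) := by
          funext i
          exact mul_inv_cancel₀ (hB.eigenvalues_pos i).ne'
        rw [this, diagonal_one, mul_one, hU']

lemma lam_pos {B : Matrix (Fin d) (Fin d) ℝ} (hd : 0 < d) (hB : B.PosDef) :
    0 < ⨅ i, hB.1.eigenvalues i := by
  have : Nonempty (Fin d) := Fin.pos_iff_nonempty.mp hd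
  obtain ⟨i₀, hi₀⟩ := exists_eq_ciInf_of_finite (f := hB.1.eigenvalues)
  exact hi₀ ▸ hB.eigenvalues_pos i₀

lemma lam_le {B : Matrix (Fin d) (Fin d) ℝ} (hB : B.PosDef) (i : Fin d) :
    ⨅ j, hB.1.eigenvalues j ≤ hB.1.eigenvalues i :=
  ciInf_le (Set.Finite.bddBelow (Set.finite_range _)) i

lemma psd_gap {B : Matrix (Fin d) (Fin d) ℝ} (hd : 0 < d) (hB : B.PosDef) :
    ((⨅ i, hB.1.eigenvalues i)⁻¹ • (1 : Matrix (Fin d) (Fin d) ℝ) - B⁻¹).PosSemidef := by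
  set lam := ⨅ i, hB.1.eigenvalues i with hlam
  set U := (hB.1.eigenvectorUnitary : Matrix (Fin d) (Fin d) ℝ) with hUdef
  have hU' : U * star U = 1 := Matrix.mem_unitaryGroup_iff.mp hB.1.eigenvectorUnitary.2
  have key : lam⁻¹ • (1 : Matrix (Fin d) (Fin d) ℝ) - B⁻¹ =
      U * diagonal (fun i => lam⁻¹ - (hB.1.eigenvalues i)⁻¹) * star U := by
    rw [inv_spectral hB]
    have h1 : lam⁻¹ • (1 : Matrix (Fin d) (Fin d) ℝ) =
        U * diagonal (fun _ => lam⁻¹) * star U := by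
      rw [show (diagonal (fun _ => lam⁻¹) : Matrix (Fin d) (Fin d) ℝ) = lam⁻¹ • 1 by
        rw [smul_eq_diagonal_mul]; simp]
      rw [Matrix.mul_smul, Matrix.smul_mul, mul_one, hU']
    rw [h1, ← Matrix.sub_mul, ← Matrix.mul_sub, diagonal_sub]
  rw [key, Matrix.star_eq_conjTranspose]
  apply Matrix.PosSemidef.mul_mul_conjTranspose_same
  refine posSemidef_diagonal_iff.mpr fun i => ?_
  have h0 : 0 < lam := lam_pos hd hB
  have := lam_le hB i
  simp only [sub_nonneg]
  exact inv_anti₀ h0 this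

lemma quad_bound {B : Matrix (Fin d) (Fin d) ℝ} (hd : 0 < d) (hB : B.PosDef)
    (v : Fin d → ℝ) :
    v ⬝ᵥ (B⁻¹ *ᵥ v) ≤ (⨅ i, hB.1.eigenvalues i)⁻¹ * (v ⬝ᵥ v) := by
  have h := psd_quad_nonneg (psd_gap hd hB) v
  rw [Matrix.sub_mulVec, dotProduct_sub, Matrix.smul_mulVec, one_mulVec,
    dotProduct_smul] at h
  simpa [smul_eq_mul] using sub_nonneg.mp h

lemma trace_bound {B M : Matrix (Fin d) (Fin d) ℝ} (hd : 0 < d) (hB : B.PosDef)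
    (hM : M.IsHermitian) :
    ∑ i, ∑ j, B⁻¹ i j * M i j ≤
      (⨅ i, hB.1.eigenvalues i)⁻¹ * ∑ i, |hM.eigenvalues i| := by
  set lam := ⨅ i, hB.1.eigenvalues i with hlam
  set V := (hM.eigenvectorUnitary : Matrix (Fin d) (Fin d) ℝ) with hVdef
  set ev := hM.eigenvalues with hev
  have hV : star V * V = 1 := Matrix.mem_unitaryGroup_iff'.mp hM.eigenvectorUnitary.2
  have hMeq : M = V * diagonal ev * star V := by
    have := hM.spectral_theorem
    rwa [RCLike.ofReal_real_eq_id, Function.id_comp] at this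
  set C := star V * B⁻¹ * V with hC
  -- column facts
  have hcol : ∀ i : Fin d, C i i = (fun j => V j i) ⬝ᵥ (B⁻¹ *ᵥ (fun j => V j i)) := by
    intro i
    simp only [hC, Matrix.mul_apply, dotProduct, mulVec, Matrix.star_apply, star_trivial,
      Finset.sum_mul, Finset.mul_sum]
    rw [Finset.sum_comm]
    apply Finset.sum_congr rfl; intro k _
    apply Finset.sum_congr rfl; intro j _
    ring
  have hunit : ∀ i : Fin d, (fun j => V j i) ⬝ᵥ (fun j => V j i) = 1 := by
    intro i
    have := congrFun (congrFun hV i) i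
    simp only [Matrix.mul_apply, Matrix.star_apply, star_trivial, Matrix.one_apply_eq] at this
    simpa [dotProduct] using this
  have hC0 : ∀ i, 0 ≤ C i i := fun i => by
    rw [hcol i]; exact psd_quad_nonneg hB.posSemidef.inv _
  have hC1 : ∀ i, C i i ≤ lam⁻¹ := fun i => by
    rw [hcol i]
    calc (fun j => V j i) ⬝ᵥ (B⁻¹ *ᵥ (fun j => V j i)) ≤
        lam⁻¹ * ((fun j => V j i) ⬝ᵥ (fun j => V j i)) := quad_bound hd hB _
      _ = lam⁻¹ := by rw [hunit i, mul_one]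
  -- rewrite the sum as a trace
  have hMsym : ∀ i j, M j i = M i j := by
    intro i j
    conv_lhs => rw [← hM]
    simp [conjTranspose_apply]
  have step1 : ∑ i, ∑ j, B⁻¹ i j * M i j = Matrix.trace (B⁻¹ * M) := by
    simp only [Matrix.trace, Matrix.diag, Matrix.mul_apply]
    apply Finset.sum_congr rfl; intro i _
    exact Finset.sum_congr rfl fun j _ => by rw [hMsym i j]
  have step2 : Matrix.trace (B⁻¹ * M) = ∑ i, C i i * ev i := by
    rw [hMeq, show B⁻¹ * (V * diagonal ev * star V) = (B⁻¹ * V * diagonal ev) * star V by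
      noncomm_ring, Matrix.trace_mul_comm,
      show star V * (B⁻¹ * V * diagonal ev) = C * diagonal ev by rw [hC]; noncomm_ring]
    simp [Matrix.trace, Matrix.diag, Matrix.mul_diagonal]
  rw [step1, step2, Finset.mul_sum]
  apply Finset.sum_le_sum
  intro i _
  calc C i i * ev i ≤ C i i * |ev i| :=
        mul_le_mul_of_nonneg_left (le_abs_self _) (hC0 i)
    _ ≤ lam⁻¹ * |ev i| := mul_le_mul_of_nonneg_right (hC1 i) (abs_nonneg _)

lemma trace_eq_sum_ev {A : Matrix (Fin d) (Fin d) ℝ} (hA : A.IsHermitian) :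
    Matrix.trace A = ∑ i, hA.eigenvalues i := by
  set V := (hA.eigenvectorUnitary : Matrix (Fin d) (Fin d) ℝ) with hVdef
  set ev := hA.eigenvalues with hev
  have hV : star V * V = 1 := Matrix.mem_unitaryGroup_iff'.mp hA.eigenvectorUnitary.2
  have hAeq : A = V * diagonal ev * star V := by
    have := hA.spectral_theorem
    rwa [RCLike.ofReal_real_eq_id, Function.id_comp] at this
  rw [hAeq, Matrix.trace_mul_comm, show star V * (V * diagonal ev) =
    (star V * V) * diagonal ev by noncomm_ring, hV, one_mul]
  simp [Matrix.trace, Matrix.diag]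

lemma trace_inv_mul_self {B : Matrix (Fin d) (Fin d) ℝ} (hB : B.PosDef) :
    ∑ i, ∑ j, B⁻¹ i j * B i j = d := by
  have hsym : ∀ i j, B j i = B i j := by
    intro i j
    conv_lhs => rw [← hB.1]
    simp [conjTranspose_apply]
  have : ∑ i, ∑ j, B⁻¹ i j * B i j = Matrix.trace (B⁻¹ * B) := by
    simp only [Matrix.trace, Matrix.diag, Matrix.mul_apply]
    exact Finset.sum_congr rfl fun i _ => Finset.sum_congr rfl fun j _ => by rw [hsym i j]
  rw [this, Matrix.nonsing_inv_mul B (Ne.isUnit hB.det_pos.ne')]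
  simp

lemma logdet_le {B : Matrix (Fin d) (Fin d) ℝ} (hB : B.PosDef) :
    Real.log B.det ≤ Matrix.trace B - d := by
  have hdet : B.det = ∏ i, hB.1.eigenvalues i := by
    have := hB.1.det_eq_prod_eigenvalues
    simpa using this
  rw [hdet, Real.log_prod (fun i _ => (hB.eigenvalues_pos i).ne'),
    trace_eq_sum_ev hB.1]
  have : ∑ i, Real.log (hB.1.eigenvalues i) ≤ ∑ i, (hB.1.eigenvalues i - 1) :=
    Finset.sum_le_sum fun i _ => Real.log_le_sub_one_of_pos (hB.eigenvalues_pos i)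
  simpa [Finset.sum_sub_distrib] using this

lemma gaussDensity_pos {m : Fin d → ℝ} {S : Matrix (Fin d) (Fin d) ℝ}
    (hS : S.PosDef) (x : Fin d → ℝ) : 0 < gaussDensity m S x := by
  unfold gaussDensity
  have h1 : (0:ℝ) < (2 * π) ^ (-(d : ℝ) / 2) :=
    Real.rpow_pos_of_pos (by positivity) _
  have h2 : (0:ℝ) < S.det ^ (-(1:ℝ)/2) := Real.rpow_pos_of_pos hS.det_pos _
  positivity

lemma log_gaussDensity {m : Fin d → ℝ} {S : Matrix (Fin d) (Fin d) ℝ}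
    (hS : S.PosDef) (x : Fin d → ℝ) :
    Real.log (gaussDensity m S x) =
      ((-(d : ℝ)/2) * Real.log (2*π) + (-(1:ℝ)/2) * Real.log S.det) +
        (-((x - m) ⬝ᵥ (S⁻¹ *ᵥ (x - m))) / 2) := by
  unfold gaussDensity
  have h1 : (0:ℝ) < (2 * π) ^ (-(d : ℝ) / 2) :=
    Real.rpow_pos_of_pos (by positivity) _
  have h2 : (0:ℝ) < S.det ^ (-(1:ℝ)/2) := Real.rpow_pos_of_pos hS.det_pos _
  rw [Real.log_mul (by positivity) (Real.exp_ne_zero _),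
    Real.log_mul h1.ne' h2.ne',
    Real.log_rpow (by positivity), Real.log_rpow hS.det_pos, Real.log_exp]

end Aux

/-- quantitative KL-reduction bound from the proof of
Theorem 1: with `Q₀ = N(0, I_d)` and `Q̂ = N(μ̂, Σ̂)`,
`D_KL(P ‖ Q̂) − D_KL(P ‖ Q₀)
  ≤ (1/2)·((1/λ̂_min)·(‖μ − μ̂‖₂² + ‖Σ − Σ̂‖_N) + √d·‖Σ − Σ̂‖_F − ‖μ‖₂²)`. -/
theorem stmt_5 (d : ℕ) (hd : 0 < d)
    (p : (Fin d → ℝ) → ℝ) (hp : ∀ x, 0 ≤ p x) (hpm : Measurable p)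
    (P : Measure (Fin d → ℝ)) [IsProbabilityMeasure P]
    (hP : P = volume.withDensity fun x => ENNReal.ofReal (p x))
    (hmom : Integrable (fun x => ∑ i, x i ^ 2) P)
    (hent : Integrable (fun x => p x * |Real.log (p x)|) volume)
    (mu : Fin d → ℝ) (hmu : ∀ i, mu i = ∫ x, x i ∂P)
    (Sig : Matrix (Fin d) (Fin d) ℝ) (hSig : Sig.PosDef)
    (hSigdef : ∀ i j, Sig i j = ∫ x, (x i - mu i) * (x j - mu j) ∂P)
    (muHat : Fin d → ℝ) (SigHat : Matrix (Fin d) (Fin d) ℝ)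
    (hSigHat : SigHat.PosDef) :
    klDivGauss P p muHat SigHat - klDivGauss P p 0 (1 : Matrix (Fin d) (Fin d) ℝ) ≤
      (1 / 2) * ((⨅ i, hSigHat.1.eigenvalues i)⁻¹ *
          ((∑ i, (mu i - muHat i) ^ 2) +
            ∑ i, |(hSig.1.sub hSigHat.1).eigenvalues i|) +
        Real.sqrt d * Real.sqrt (∑ i, ∑ j, (Sig i j - SigHat i j) ^ 2) -
        ∑ i, mu i ^ 2) := by
  have hne : Nonempty (Fin d) := Fin.pos_iff_nonempty.mp hd
  -- basic integrability of coordinate functions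
  have hx2 : ∀ i, Integrable (fun x : Fin d → ℝ => x i ^ 2) P := by
    intro i
    refine hmom.mono' ((measurable_pi_apply i).pow_const 2).aestronglyMeasurable
      (ae_of_all _ fun x => ?_)
    rw [Real.norm_eq_abs, abs_of_nonneg (sq_nonneg _)]
    exact Finset.single_le_sum (fun k _ => sq_nonneg (x k)) (Finset.mem_univ i)
  have hxi : ∀ i, Integrable (fun x : Fin d → ℝ => x i) P := by
    intro i
    have hb : Integrable (fun x : Fin d → ℝ => 1 + ∑ k, x k ^ 2) P :=
      (integrable_const 1).add hmom
    refine hb.mono' (measurable_pi_apply i).aestronglyMeasurable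
      (ae_of_all _ fun x => ?_)
    rw [Real.norm_eq_abs]
    have h1 : x i ^ 2 ≤ ∑ k, x k ^ 2 :=
      Finset.single_le_sum (fun k _ => sq_nonneg (x k)) (Finset.mem_univ i)
    nlinarith [sq_nonneg (|x i| - 1), abs_nonneg (x i), sq_abs (x i)]
  have hxij : ∀ i j, Integrable (fun x : Fin d → ℝ => x i * x j) P := by
    intro i j
    have hb : Integrable (fun x : Fin d → ℝ => 2 * ∑ k, x k ^ 2) P := hmom.const_mul 2
    refine hb.mono' ((measurable_pi_apply i).mul
      (measurable_pi_apply j)).aestronglyMeasurable (ae_of_all _ fun x => ?_)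
    rw [Real.norm_eq_abs, abs_mul]
    have h1 : x i ^ 2 ≤ ∑ k, x k ^ 2 :=
      Finset.single_le_sum (fun k _ => sq_nonneg (x k)) (Finset.mem_univ i)
    have h2 : x j ^ 2 ≤ ∑ k, x k ^ 2 :=
      Finset.single_le_sum (fun k _ => sq_nonneg (x k)) (Finset.mem_univ j)
    nlinarith [sq_nonneg (|x i| - |x j|), abs_nonneg (x i), abs_nonneg (x j),
      sq_abs (x i), sq_abs (x j)]
  have habc : ∀ (a : Fin d → ℝ) i j,
      Integrable (fun x : Fin d → ℝ => (x i - a i) * (x j - a j)) P := by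
    intro a i j
    have : (fun x : Fin d → ℝ => (x i - a i) * (x j - a j)) =
        fun x => x i * x j - a i * x j - a j * x i + a i * a j := by
      funext x; ring
    rw [this]
    exact (((hxij i j).sub ((hxi j).const_mul _)).sub ((hxi i).const_mul _)).add
      (integrable_const _)
  -- integral values
  have hlin : ∀ (c1 c2 c3 : ℝ) (i j : Fin d),
      Integrable (fun x : Fin d → ℝ => c1 * x j + c2 * x i - c3) P := by
    intro c1 c2 c3 i j
    exact (((hxi j).const_mul c1).add ((hxi i).const_mul c2)).sub (integrable_const c3)
  have hlinval : ∀ (c1 c2 c3 : ℝ) (i j : Fin d),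
      ∫ x, (c1 * x j + c2 * x i - c3) ∂P = c1 * mu j + c2 * mu i - c3 := by
    intro c1 c2 c3 i j
    have h1 : Integrable (fun x : Fin d → ℝ => c1 * x j) P := (hxi j).const_mul c1
    have h2 : Integrable (fun x : Fin d → ℝ => c2 * x i) P := (hxi i).const_mul c2
    have h12 : Integrable (fun x : Fin d → ℝ => c1 * x j + c2 * x i) P := h1.add h2
    rw [integral_sub h12 (integrable_const c3), integral_add h1 h2,
      integral_const_mul, integral_const_mul, integral_const, ← hmu i, ← hmu j]
    simp [measure_univ]
  have hm2 : ∀ i j, ∫ x, x i * x j ∂P = Sig i j + mu i * mu j := by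
    intro i j
    have hg : Integrable (fun x : Fin d → ℝ =>
        mu i * x j + mu j * x i - mu i * mu j) P := hlin _ _ _ i j
    have expand : (fun x : Fin d → ℝ => (x i - mu i) * (x j - mu j)) =
        fun x => x i * x j - (mu i * x j + mu j * x i - mu i * mu j) := by
      funext x; ring
    have hthis := hSigdef i j
    rw [expand, integral_sub (hxij i j) hg, hlinval (mu i) (mu j) (mu i * mu j) i j] at hthis
    linarith
  have hprod : ∀ (a : Fin d → ℝ) i j,
      ∫ x, (x i - a i) * (x j - a j) ∂P = Sig i j + (mu i - a i) * (mu j - a j) := by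
    intro a i j
    have hg : Integrable (fun x : Fin d → ℝ =>
        a i * x j + a j * x i - a i * a j) P := hlin _ _ _ i j
    have expand : (fun x : Fin d → ℝ => (x i - a i) * (x j - a j)) =
        fun x => x i * x j - (a i * x j + a j * x i - a i * a j) := by
      funext x; ring
    rw [expand, integral_sub (hxij i j) hg, hlinval (a i) (a j) (a i * a j) i j, hm2 i j]
    ring
  -- quadratic forms
  have hdot : ∀ (A : Matrix (Fin d) (Fin d) ℝ) (v : Fin d → ℝ),
      v ⬝ᵥ (A *ᵥ v) = ∑ i, ∑ j, A i j * (v i * v j) := by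
    intro A v
    simp only [dotProduct, mulVec, Finset.mul_sum]
    exact Finset.sum_congr rfl fun i _ => Finset.sum_congr rfl fun j _ => by ring
  have hquadexp : ∀ (A : Matrix (Fin d) (Fin d) ℝ) (a x : Fin d → ℝ),
      (x - a) ⬝ᵥ (A *ᵥ (x - a)) = ∑ i, ∑ j, A i j * ((x i - a i) * (x j - a j)) := by
    intro A a x
    rw [hdot]
    exact Finset.sum_congr rfl fun i _ => Finset.sum_congr rfl fun j _ => by
      simp [Pi.sub_apply]
  have hquadInt : ∀ (A : Matrix (Fin d) (Fin d) ℝ) (a : Fin d → ℝ),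
      Integrable (fun x => (x - a) ⬝ᵥ (A *ᵥ (x - a))) P := by
    intro A a
    have : (fun x : Fin d → ℝ => (x - a) ⬝ᵥ (A *ᵥ (x - a))) =
        fun x => ∑ i, ∑ j, A i j * ((x i - a i) * (x j - a j)) := by
      funext x; exact hquadexp A a x
    rw [this]
    exact integrable_finset_sum _ fun i _ =>
      integrable_finset_sum _ fun j _ => (habc a i j).const_mul _
  have hquadVal : ∀ (A : Matrix (Fin d) (Fin d) ℝ) (a : Fin d → ℝ),
      ∫ x, (x - a) ⬝ᵥ (A *ᵥ (x - a)) ∂P =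
        ∑ i, ∑ j, A i j * (Sig i j + (mu i - a i) * (mu j - a j)) := by
    intro A a
    have heq : (fun x : Fin d → ℝ => (x - a) ⬝ᵥ (A *ᵥ (x - a))) =
        fun x => ∑ i, ∑ j, A i j * ((x i - a i) * (x j - a j)) := by
      funext x; exact hquadexp A a x
    rw [heq, integral_finsetSum _ (f := fun i (x : Fin d → ℝ) => ∑ j, A i j * ((x i - a i) * (x j - a j))) (fun i _ =>
      integrable_finset_sum _ fun j _ => (habc a i j).const_mul _)]
    refine Finset.sum_congr rfl fun i _ => ?_
    rw [integral_finsetSum _ (f := fun j (x : Fin d → ℝ) => A i j * ((x i - a i) * (x j - a j))) (fun j _ => (habc a i j).const_mul _)]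
    refine Finset.sum_congr rfl fun j _ => ?_
    rw [integral_const_mul, hprod a i j]
  -- log p is P-integrable
  have hlogp_vol : Integrable (fun x => p x * Real.log (p x)) volume := by
    refine hent.mono' ((hpm.mul (Real.measurable_log.comp hpm)).aestronglyMeasurable)
      (ae_of_all _ fun x => ?_)
    rw [Real.norm_eq_abs, abs_mul, abs_of_nonneg (hp x)]
  have hlogp : Integrable (fun x => Real.log (p x)) P := by
    rw [hP]
    rw [show (fun x : Fin d → ℝ => ENNReal.ofReal (p x)) =
      (fun x : Fin d → ℝ => ((p x).toNNReal : ENNReal)) from rfl]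
    rw [integrable_withDensity_iff_integrable_smul (show Measurable (fun x : Fin d → ℝ => (p x).toNNReal) from measurable_real_toNNReal.comp hpm)]
    exact hlogp_vol.congr (ae_of_all _ fun x => by
      simp [NNReal.smul_def, Real.coe_toNNReal _ (hp x)])
  -- a.e. positivity of p under P
  have hae : ∀ᵐ x ∂P, p x ≠ 0 := by
    rw [hP, ae_iff]
    have hset : {x : Fin d → ℝ | ¬ p x ≠ 0} = {x | p x = 0} := by ext x; simp
    have hs : MeasurableSet {x : Fin d → ℝ | p x = 0} := hpm (measurableSet_singleton 0)
    rw [hset, withDensity_apply _ hs]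
    rw [setLIntegral_congr_fun hs (fun x (hx : p x = 0) => by
      simp [hx] : Set.EqOn (fun x => ENNReal.ofReal (p x)) (fun _ => 0) {x | p x = 0})]
    simp
  -- evaluation of the KL divergence against a Gaussian
  have hklEq : ∀ (m : Fin d → ℝ) (S : Matrix (Fin d) (Fin d) ℝ) (hS : S.PosDef),
      klDivGauss P p m S = (∫ x, Real.log (p x) ∂P) -
        ((-(d : ℝ)/2) * Real.log (2*π) + (-(1:ℝ)/2) * Real.log S.det) +
        (1/2) * ∑ i, ∑ j, S⁻¹ i j * (Sig i j + (mu i - m i) * (mu j - m j)) := by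
    intro m S hS
    have hcongr : ∀ᵐ x ∂P, Real.log (p x / gaussDensity m S x) =
        Real.log (p x) - Real.log (gaussDensity m S x) := by
      filter_upwards [hae] with x hx
      rw [Real.log_div hx (gaussDensity_pos hS x).ne']
    have hlg : (fun x => Real.log (gaussDensity m S x)) =
        fun x => ((-(d : ℝ)/2) * Real.log (2*π) + (-(1:ℝ)/2) * Real.log S.det) +
          (-((x - m) ⬝ᵥ (S⁻¹ *ᵥ (x - m))) / 2) := by
      funext x; exact log_gaussDensity hS x
    have hq2 : Integrable (fun x : Fin d → ℝ =>
        -((x - m) ⬝ᵥ (S⁻¹ *ᵥ (x - m))) / 2) P := by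
      exact ((hquadInt S⁻¹ m).neg).div_const 2
    have hg_int : Integrable (fun x => Real.log (gaussDensity m S x)) P := by
      rw [hlg]
      exact (integrable_const _).add hq2
    unfold klDivGauss
    rw [integral_congr_ae hcongr, integral_sub hlogp hg_int]
    congr 1
    rw [hlg, integral_add (integrable_const _) hq2, integral_const]
    simp only [measure_univ, ENNReal.toReal_one, smul_eq_mul, one_mul, probReal_univ]
    rw [integral_div, integral_neg, hquadVal S⁻¹ m]
    ring
  -- instantiate at the two Gaussians
  have hone : (1 : Matrix (Fin d) (Fin d) ℝ).PosDef := Matrix.PosDef.one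
  rw [hklEq muHat SigHat hSigHat, hklEq 0 1 hone]
  have h1sum : ∑ i, ∑ j, (1 : Matrix (Fin d) (Fin d) ℝ)⁻¹ i j *
      (Sig i j + (mu i - (0 : Fin d → ℝ) i) * (mu j - (0 : Fin d → ℝ) j)) =
      ∑ i, (Sig i i + mu i * mu i) := by
    rw [inv_one]
    refine Finset.sum_congr rfl fun i _ => ?_
    rw [Finset.sum_eq_single i]
    · simp [Matrix.one_apply]
    · intro j _ hj
      simp [Matrix.one_apply, (Ne.symm hj)]
    · intro h; exact absurd (Finset.mem_univ i) h
  rw [h1sum]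
  simp only [Matrix.det_one, Real.log_one, mul_zero, add_zero]
  -- the key matrix inequality
  set lam := ⨅ i, hSigHat.1.eigenvalues i with hlam
  set delta : Fin d → ℝ := fun i => mu i - muHat i with hdelta
  have hThat : ∑ i, ∑ j, SigHat⁻¹ i j * (Sig i j + (mu i - muHat i) * (mu j - muHat j)) =
      (∑ i, ∑ j, SigHat⁻¹ i j * (Sig i j - SigHat i j)) +
      (∑ i, ∑ j, SigHat⁻¹ i j * SigHat i j) +
      (∑ i, ∑ j, SigHat⁻¹ i j * (delta i * delta j)) := by
    simp only [← Finset.sum_add_distrib]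
    refine Finset.sum_congr rfl fun i _ => ?_
    refine Finset.sum_congr rfl fun j _ => ?_
    simp only [hdelta]; ring
  -- bound the three pieces
  have b1 : ∑ i, ∑ j, SigHat⁻¹ i j * (Sig i j - SigHat i j) ≤
      lam⁻¹ * ∑ i, |(hSig.1.sub hSigHat.1).eigenvalues i| := by
    have := trace_bound hd hSigHat (hSig.1.sub hSigHat.1)
    simpa [Matrix.sub_apply] using this
  have b2 : ∑ i, ∑ j, SigHat⁻¹ i j * (delta i * delta j) ≤
      lam⁻¹ * ∑ i, (mu i - muHat i) ^ 2 := by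
    have h := quad_bound hd hSigHat delta
    rw [hdot] at h
    have hdd : delta ⬝ᵥ delta = ∑ i, (mu i - muHat i) ^ 2 := by
      simp [dotProduct, hdelta, sq]
    rw [hdd] at h
    exact h
  have b3 : ∑ i, ∑ j, SigHat⁻¹ i j * SigHat i j = (d : ℝ) :=
    trace_inv_mul_self hSigHat
  have b4 : Real.log SigHat.det ≤ Matrix.trace SigHat - d := logdet_le hSigHat
  have b5 : Matrix.trace SigHat - Matrix.trace Sig ≤
      Real.sqrt d * Real.sqrt (∑ i, ∑ j, (Sig i j - SigHat i j) ^ 2) := by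
    have hdiag : Matrix.trace SigHat - Matrix.trace Sig =
        ∑ i, (SigHat i i - Sig i i) := by
      simp [Matrix.trace, Matrix.diag, Finset.sum_sub_distrib]
    have hs2 : (∑ i, (SigHat i i - Sig i i)) ^ 2 ≤
        (d : ℝ) * ∑ i, (SigHat i i - Sig i i) ^ 2 := by
      have := sq_sum_le_card_mul_sum_sq (s := (Finset.univ : Finset (Fin d)))
        (f := fun i => SigHat i i - Sig i i)
      simpa using this
    have hdle : ∑ i, (SigHat i i - Sig i i) ^ 2 ≤
        ∑ i, ∑ j, (Sig i j - SigHat i j) ^ 2 := by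
      refine Finset.sum_le_sum fun i _ => ?_
      have : (SigHat i i - Sig i i) ^ 2 = (Sig i i - SigHat i i) ^ 2 := by ring
      rw [this]
      exact Finset.single_le_sum (f := fun j => (Sig i j - SigHat i j) ^ 2)
        (fun j _ => sq_nonneg _) (Finset.mem_univ i)
    rw [hdiag]
    calc ∑ i, (SigHat i i - Sig i i)
        ≤ |∑ i, (SigHat i i - Sig i i)| := le_abs_self _
      _ = Real.sqrt ((∑ i, (SigHat i i - Sig i i)) ^ 2) := (Real.sqrt_sq_eq_abs _).symm
      _ ≤ Real.sqrt ((d : ℝ) * ∑ i, ∑ j, (Sig i j - SigHat i j) ^ 2) := by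
          apply Real.sqrt_le_sqrt
          calc (∑ i, (SigHat i i - Sig i i)) ^ 2
              ≤ (d : ℝ) * ∑ i, (SigHat i i - Sig i i) ^ 2 := hs2
            _ ≤ (d : ℝ) * ∑ i, ∑ j, (Sig i j - SigHat i j) ^ 2 := by
                exact mul_le_mul_of_nonneg_left hdle (Nat.cast_nonneg d)
      _ = Real.sqrt d * Real.sqrt (∑ i, ∑ j, (Sig i j - SigHat i j) ^ 2) :=
          Real.sqrt_mul (Nat.cast_nonneg d) _
  have htr : Matrix.trace Sig = ∑ i, Sig i i := by simp [Matrix.trace, Matrix.diag]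
  have hmusq : ∑ i, mu i * mu i = ∑ i, mu i ^ 2 :=
    Finset.sum_congr rfl fun i _ => by ring
  have hsplit : lam⁻¹ * ((∑ i, (mu i - muHat i) ^ 2) +
      ∑ i, |(hSig.1.sub hSigHat.1).eigenvalues i|) =
      lam⁻¹ * (∑ i, (mu i - muHat i) ^ 2) +
      lam⁻¹ * ∑ i, |(hSig.1.sub hSigHat.1).eigenvalues i| := by ring
  have hSigsum : ∑ i, (Sig i i + mu i * mu i) = Matrix.trace Sig + ∑ i, mu i ^ 2 := by
    rw [htr, ← hmusq, Finset.sum_add_distrib]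
  rw [hThat, b3, hSigsum]
  rw [hsplit]
  linarith [b1, b2, b4, b5]
end

section
/- Let d be a positive integer, let μ̂, Σ̂, μ, Σ be as follows: μ, μ̂ ∈ ℝ^d, Σ, Σ̂ d×d symmetric positive-definite matrices, and let λ̂_min be the smallest eigenvalue of Σ̂. Then log det Σ̂ + tr(Σ̂⁻¹ Σ) + (μ − μ̂)ᵀ Σ̂⁻¹ (μ − μ̂) ≤ tr Σ + √d·‖Σ̂ − Σ‖_F + (1/λ̂_min)·( ‖Σ − Σ̂‖_N + ‖μ − μ̂‖₂² ). -/
open Matrix Real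

lemma star_eq_transpose' {d : ℕ} (U : Matrix (Fin d) (Fin d) ℝ) : star U = Uᵀ := by
  ext i j; simp [Matrix.conjTranspose_apply]

lemma quad_decomp' {d : ℕ} (U : Matrix (Fin d) (Fin d) ℝ)
    (lam : Fin d → ℝ) (v : Fin d → ℝ) :
    v ⬝ᵥ ((U * Matrix.diagonal lam * Uᵀ) *ᵥ v) = ∑ i, lam i * ((Uᵀ *ᵥ v) i)^2 := by
  set w := Uᵀ *ᵥ v with hw
  have hvU : v ᵥ* U = w := (Matrix.mulVec_transpose U v).symm
  rw [← Matrix.mulVec_mulVec, Matrix.dotProduct_mulVec, ← Matrix.vecMul_vecMul, hvU]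
  simp only [Matrix.vecMul_diagonal, dotProduct]
  exact Finset.sum_congr rfl fun i _ => by ring

lemma norm_decomp' {d : ℕ} (U : Matrix (Fin d) (Fin d) ℝ) (hU : U * Uᵀ = 1) (v : Fin d → ℝ) :
    ∑ i, ((Uᵀ *ᵥ v) i)^2 = ∑ i, (v i)^2 := by
  have h1 : ∀ (w : Fin d → ℝ), ∑ i, (w i)^2 = w ⬝ᵥ w := by
    intro w; simp [dotProduct, sq]
  rw [h1, h1]
  nth_rewrite 1 [Matrix.mulVec_transpose]
  rw [Matrix.dotProduct_mulVec, Matrix.vecMul_vecMul, hU, Matrix.vecMul_one]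

lemma trace_decomp' {d : ℕ} (A U : Matrix (Fin d) (Fin d) ℝ) (nu : Fin d → ℝ) :
    Matrix.trace (A * (U * Matrix.diagonal nu * Uᵀ)) =
      ∑ i, nu i * ((fun j => U j i) ⬝ᵥ (A *ᵥ (fun j => U j i))) := by
  have h : A * (U * Matrix.diagonal nu * Uᵀ) = (A * U * Matrix.diagonal nu) * Uᵀ := by
    rw [← mul_assoc, ← mul_assoc]
  rw [h, Matrix.trace_mul_comm, ← mul_assoc]
  have h2 : ∀ (M : Matrix (Fin d) (Fin d) ℝ),
      Matrix.trace (M * Matrix.diagonal nu) = ∑ i, M i i * nu i := by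
    intro M; simp [Matrix.trace, Matrix.mul_diagonal]
  rw [h2]
  refine Finset.sum_congr rfl fun i _ => ?_
  simp only [Matrix.mul_apply, Matrix.transpose_apply, dotProduct, Matrix.mulVec,
    Finset.sum_mul, Finset.mul_sum]
  exact Finset.sum_congr rfl fun j _ => Finset.sum_congr rfl fun k _ => by ring

lemma spectral_real {d : ℕ} {A : Matrix (Fin d) (Fin d) ℝ} (hA : A.IsHermitian) :
    A = (hA.eigenvectorUnitary : Matrix (Fin d) (Fin d) ℝ) * Matrix.diagonal hA.eigenvalues *
      (hA.eigenvectorUnitary : Matrix (Fin d) (Fin d) ℝ)ᵀ := by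
  have h := hA.spectral_theorem
  rw [Unitary.conjStarAlgAut_apply] at h
  rw [star_eq_transpose'] at h
  simpa using h

/-- deterministic inequality at the heart of Theorem 1's proof:
`log det Σ̂ + tr(Σ̂⁻¹ Σ) + (μ − μ̂)ᵀ Σ̂⁻¹ (μ − μ̂)
  ≤ tr Σ + √d·‖Σ̂ − Σ‖_F + (1/λ̂_min)·(‖Σ − Σ̂‖_N + ‖μ − μ̂‖₂²)`. -/
theorem stmt_7 (d : ℕ) (hd : 0 < d) (mu muHat : Fin d → ℝ)
    (Sig SigHat : Matrix (Fin d) (Fin d) ℝ)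
    (hSig : Sig.PosDef) (hSigHat : SigHat.PosDef) :
    Real.log SigHat.det + (SigHat⁻¹ * Sig).trace +
        (mu - muHat) ⬝ᵥ (SigHat⁻¹ *ᵥ (mu - muHat)) ≤
      Sig.trace + Real.sqrt d * Real.sqrt (∑ i, ∑ j, (SigHat i j - Sig i j) ^ 2) +
        (⨅ i, hSigHat.1.eigenvalues i)⁻¹ *
          ((∑ i, |(hSig.1.sub hSigHat.1).eigenvalues i|) +
            ∑ i, (mu i - muHat i) ^ 2) := by
  classical
  have hne : Nonempty (Fin d) := ⟨⟨0, hd⟩⟩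
  have hH := hSigHat.1
  set U : Matrix (Fin d) (Fin d) ℝ := (hH.eigenvectorUnitary : Matrix (Fin d) (Fin d) ℝ) with hUdef
  set lam : Fin d → ℝ := hH.eigenvalues with hlamdef
  have hUU : U * Uᵀ = 1 := by
    have h := Matrix.mem_unitaryGroup_iff.mp hH.eigenvectorUnitary.2
    rwa [star_eq_transpose'] at h
  have hUU' : Uᵀ * U = 1 := by
    have h := Matrix.mem_unitaryGroup_iff'.mp hH.eigenvectorUnitary.2
    rwa [star_eq_transpose'] at h
  have hspec : SigHat = U * Matrix.diagonal lam * Uᵀ := spectral_real hH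
  have hlpos : ∀ i, 0 < lam i := fun i => hSigHat.eigenvalues_pos i
  set lmin : ℝ := ⨅ i, lam i with hlmindef
  have hlmin_le : ∀ i, lmin ≤ lam i := fun i => ciInf_le (Finite.bddBelow_range _) i
  have hlminpos : 0 < lmin := by
    obtain ⟨i, hi⟩ := exists_eq_ciInf_of_finite (f := lam)
    rw [hlmindef, ← hi]; exact hlpos i
  -- inverse formula
  have hinv : SigHat⁻¹ = U * Matrix.diagonal (fun i => (lam i)⁻¹) * Uᵀ := by
    apply Matrix.inv_eq_right_inv
    rw [hspec]
    have h1 : U * Matrix.diagonal lam * Uᵀ * (U * Matrix.diagonal (fun i => (lam i)⁻¹) * Uᵀ)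
        = U * (Matrix.diagonal lam * ((Uᵀ * U) * (Matrix.diagonal (fun i => (lam i)⁻¹) * Uᵀ))) := by
      simp only [mul_assoc]
    rw [h1, hUU', one_mul, ← mul_assoc (Matrix.diagonal lam), Matrix.diagonal_mul_diagonal]
    have h2 : (fun i => lam i * (lam i)⁻¹) = fun _ => (1:ℝ) :=
      funext fun i => mul_inv_cancel₀ (hlpos i).ne'
    rw [h2, Matrix.diagonal_one, one_mul, hUU]
  -- quadratic form bounds
  have hquad_nn : ∀ v : Fin d → ℝ, 0 ≤ v ⬝ᵥ (SigHat⁻¹ *ᵥ v) := by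
    intro v; rw [hinv, quad_decomp']
    exact Finset.sum_nonneg fun i _ => mul_nonneg (inv_nonneg.mpr (hlpos i).le) (sq_nonneg _)
  have hquad_ub : ∀ v : Fin d → ℝ, v ⬝ᵥ (SigHat⁻¹ *ᵥ v) ≤ lmin⁻¹ * ∑ i, (v i)^2 := by
    intro v
    rw [hinv, quad_decomp']
    calc ∑ i, (lam i)⁻¹ * ((Uᵀ *ᵥ v) i)^2
        ≤ ∑ i, lmin⁻¹ * ((Uᵀ *ᵥ v) i)^2 := by
          refine Finset.sum_le_sum fun i _ => ?_
          exact mul_le_mul_of_nonneg_right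
            (inv_anti₀ hlminpos (hlmin_le i)) (sq_nonneg _)
      _ = lmin⁻¹ * ∑ i, ((Uᵀ *ᵥ v) i)^2 := (Finset.mul_sum _ _ _).symm
      _ = lmin⁻¹ * ∑ i, (v i)^2 := by rw [norm_decomp' U hUU]
  -- log det bound
  have htrS : SigHat.trace = ∑ i, lam i := by
    rw [hspec, Matrix.trace_mul_comm, ← mul_assoc, hUU', one_mul, Matrix.trace_diagonal]
  have hdet : SigHat.det = ∏ i, lam i := by
    have h := hH.det_eq_prod_eigenvalues
    simpa using h
  have hlog : Real.log SigHat.det ≤ SigHat.trace - d := by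
    rw [hdet, Real.log_prod (fun i _ => (hlpos i).ne'), htrS]
    have h := Finset.sum_le_sum (s := Finset.univ)
      (fun i (_ : i ∈ Finset.univ) => Real.log_le_sub_one_of_pos (hlpos i))
    calc ∑ i, Real.log (lam i) ≤ ∑ i, (lam i - 1) := h
      _ = (∑ i, lam i) - d := by
          rw [Finset.sum_sub_distrib]
          simp
  -- trace decomposition
  have hdetu : IsUnit SigHat.det := (ne_of_gt hSigHat.det_pos).isUnit
  have htr2 : (SigHat⁻¹ * Sig).trace = (d:ℝ) + (SigHat⁻¹ * (Sig - SigHat)).trace := by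
    have h : SigHat⁻¹ * Sig = SigHat⁻¹ * SigHat + SigHat⁻¹ * (Sig - SigHat) := by
      rw [← mul_add]; congr 1; abel
    rw [h, Matrix.trace_add, Matrix.nonsing_inv_mul _ hdetu, Matrix.trace_one]
    simp
  -- nuclear norm bound
  have hD : (Sig - SigHat).IsHermitian := hSig.1.sub hSigHat.1
  set V : Matrix (Fin d) (Fin d) ℝ := (hD.eigenvectorUnitary : Matrix (Fin d) (Fin d) ℝ) with hVdef
  set nu : Fin d → ℝ := hD.eigenvalues with hnudef
  have hVV' : Vᵀ * V = 1 := by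
    have h := Matrix.mem_unitaryGroup_iff'.mp hD.eigenvectorUnitary.2
    rwa [star_eq_transpose'] at h
  have hspecD : Sig - SigHat = V * Matrix.diagonal nu * Vᵀ := spectral_real hD
  have hnuc : (SigHat⁻¹ * (Sig - SigHat)).trace ≤ lmin⁻¹ * ∑ i, |nu i| := by
    rw [hspecD, trace_decomp']
    rw [Finset.mul_sum]
    refine Finset.sum_le_sum fun i _ => ?_
    set c : Fin d → ℝ := fun j => V j i with hc
    have hcol : ∑ j, (c j)^2 = 1 := by
      have h := congrFun (congrFun hVV' i) i
      simp only [Matrix.mul_apply, Matrix.transpose_apply, Matrix.one_apply_eq] at h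
      simpa [sq] using h
    have hq0 : 0 ≤ c ⬝ᵥ (SigHat⁻¹ *ᵥ c) := hquad_nn c
    have hq1 : c ⬝ᵥ (SigHat⁻¹ *ᵥ c) ≤ lmin⁻¹ := by
      have h := hquad_ub c
      rwa [hcol, mul_one] at h
    calc nu i * (c ⬝ᵥ (SigHat⁻¹ *ᵥ c)) ≤ |nu i| * (c ⬝ᵥ (SigHat⁻¹ *ᵥ c)) :=
          mul_le_mul_of_nonneg_right (le_abs_self _) hq0
      _ ≤ |nu i| * lmin⁻¹ := mul_le_mul_of_nonneg_left hq1 (abs_nonneg _)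
      _ = lmin⁻¹ * |nu i| := mul_comm _ _
  -- Frobenius bound
  have hfrob : SigHat.trace - Sig.trace ≤
      Real.sqrt d * Real.sqrt (∑ i, ∑ j, (SigHat i j - Sig i j)^2) := by
    have h1 : SigHat.trace - Sig.trace = ∑ i, (SigHat i i - Sig i i) := by
      simp [Matrix.trace, Matrix.diag, Finset.sum_sub_distrib]
    rw [h1]
    have hS0 : (0:ℝ) ≤ ∑ i, ∑ j, (SigHat i j - Sig i j)^2 :=
      Finset.sum_nonneg fun i _ => Finset.sum_nonneg fun j _ => sq_nonneg _
    have h3 : ∑ i, (SigHat i i - Sig i i)^2 ≤ ∑ i, ∑ j, (SigHat i j - Sig i j)^2 :=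
      Finset.sum_le_sum fun i _ =>
        Finset.single_le_sum (f := fun j => (SigHat i j - Sig i j)^2)
          (fun j _ => sq_nonneg _) (Finset.mem_univ i)
    calc ∑ i, (SigHat i i - Sig i i) ≤ |∑ i, (SigHat i i - Sig i i)| := le_abs_self _
      _ = Real.sqrt ((∑ i, (SigHat i i - Sig i i))^2) := (Real.sqrt_sq_eq_abs _).symm
      _ ≤ Real.sqrt (↑d * ∑ i, (SigHat i i - Sig i i)^2) := by
          apply Real.sqrt_le_sqrt
          have h := sq_sum_le_card_mul_sum_sq
            (s := (Finset.univ : Finset (Fin d))) (f := fun i => SigHat i i - Sig i i)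
          simpa using h
      _ = Real.sqrt d * Real.sqrt (∑ i, (SigHat i i - Sig i i)^2) :=
          Real.sqrt_mul (Nat.cast_nonneg d) _
      _ ≤ Real.sqrt d * Real.sqrt (∑ i, ∑ j, (SigHat i j - Sig i j)^2) := by
          exact mul_le_mul_of_nonneg_left (Real.sqrt_le_sqrt h3) (Real.sqrt_nonneg _)
  -- combine
  have hx : (mu - muHat) ⬝ᵥ (SigHat⁻¹ *ᵥ (mu - muHat)) ≤ lmin⁻¹ * ∑ i, (mu i - muHat i)^2 := by
    have h := hquad_ub (mu - muHat)
    simpa [Pi.sub_apply] using h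
  have hsplit : lmin⁻¹ * ((∑ i, |nu i|) + ∑ i, (mu i - muHat i)^2)
      = lmin⁻¹ * (∑ i, |nu i|) + lmin⁻¹ * ∑ i, (mu i - muHat i)^2 := by ring
  linarith [hlog, htr2, hnuc, hfrob, hx]
end
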